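/- For every zone Z over a finite set X of clocks, the time-elapse set {v + δ | v ∈ Z, δ ∈ ℝ≥0} (where v + δ is the valuation mapping each clock x to v(x) + δ) is again a zone over X. -/

import Mathlib

/-- The five comparison operators `<, ≤, =, ≥, >`. -/
inductive CmpOp where
  | lt | le | eq | ge | gt

/-- Interpretation of a comparison operator over the reals. -/
def CmpOp.holds : CmpOp → ℝ → ℝ → Prop
  | .lt, a, b => a < b
  | .le, a, b => a ≤ b
  | .eq, a, b => a = b
  | .ge, a, b => a ≥ b
  | .gt, a, b => a > b

/-- A valuation over the set of clocks `X` assigns a nonnegative real to each clock. -/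
abbrev Val (X : Type) := X → NNReal

/-- Atomic zone constraints: `x # c` or `x - y # c` with `c : ℤ`. -/
inductive ZoneAtom (X : Type) where
  | single (x : X) (r : CmpOp) (c : ℤ)
  | diff (x y : X) (r : CmpOp) (c : ℤ)

/-- Satisfaction of an atomic zone constraint, differences taken in `ℝ`. -/
def ZoneAtom.sat {X : Type} (v : Val X) : ZoneAtom X → Prop
  | .single x r c => r.holds (v x : ℝ) (c : ℝ)
  | .diff x y r c => r.holds ((v x : ℝ) - (v y : ℝ)) (c : ℝ)

/-- A zone over `X` is a set of valuations described by a finite conjunction of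
atomic zone constraints. -/
def IsZone {X : Type} (Z : Set (Val X)) : Prop :=
  ∃ φ : List (ZoneAtom X), Z = { v | ∀ a ∈ φ, a.sat v }

/-- An atomic clock constraint `x # c` with `c : ℕ`. -/
structure ClockAtom (X : Type) where
  x : X
  r : CmpOp
  c : ℕ

/-- A clock constraint is a finite conjunction of atomic clock constraints. -/
abbrev ClockConstraint (X : Type) := List (ClockAtom X)

/-- A valuation satisfies a clock constraint when it satisfies every conjunct. -/
def ClockConstraint.sat {X : Type} (v : Val X) (g : ClockConstraint X) : Prop :=
  ∀ a ∈ g, a.r.holds (v a.x : ℝ) (a.c : ℝ)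

/- `[R]v`: reset the clocks in `R` to `0`, leave the others unchanged. -/
open Classical in
noncomputable def resetVal {X : Type} (R : Set X) (v : Val X) : Val X :=
  fun x => if x ∈ R then 0 else v x


namespace TE

abbrev Bnd := ℝ × Bool

def lbSat (d : ℝ) (p : Bnd) : Prop := if p.2 then p.1 < d else p.1 ≤ d
def ubSat (d : ℝ) (q : Bnd) : Prop := if q.2 then d < q.1 else d ≤ q.1
def pOK (p q : Bnd) : Prop := if p.2 || q.2 then p.1 < q.1 else p.1 ≤ q.1

/-- stronger lower bound -/
noncomputable def sL (p q : Bnd) : Bnd :=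
  if p.1 < q.1 then q else if q.1 < p.1 then p else if p.2 then p else q
/-- stronger upper bound -/
noncomputable def sU (p q : Bnd) : Bnd :=
  if p.1 < q.1 then p else if q.1 < p.1 then q else if p.2 then p else q

lemma sL_mem (p q : Bnd) : sL p q = p ∨ sL p q = q := by unfold sL; split_ifs <;> simp
lemma sU_mem (p q : Bnd) : sU p q = p ∨ sU p q = q := by unfold sU; split_ifs <;> simp

lemma lbSat_sL {d : ℝ} {p q : Bnd} (h : lbSat d (sL p q)) : lbSat d p ∧ lbSat d q := by
  unfold sL lbSat at *
  split_ifs at h ⊢ <;> simp_all <;> linarith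

lemma ubSat_sU {d : ℝ} {p q : Bnd} (h : ubSat d (sU p q)) : ubSat d p ∧ ubSat d q := by
  unfold sU ubSat at *
  split_ifs at h ⊢ <;> simp_all <;> linarith

noncomputable def maxL : List Bnd → Option Bnd
  | [] => none
  | p :: L => some ((maxL L).elim p (sL p))

noncomputable def minU : List Bnd → Option Bnd
  | [] => none
  | p :: L => some ((minU L).elim p (sU p))

lemma maxL_none {L : List Bnd} (h : maxL L = none) : L = [] := by
  cases L with
  | nil => rfl
  | cons p L => simp [maxL] at h

lemma minU_none {L : List Bnd} (h : minU L = none) : L = [] := by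
  cases L with
  | nil => rfl
  | cons p L => simp [minU] at h

lemma maxL_mem : ∀ {L : List Bnd} {p : Bnd}, maxL L = some p → p ∈ L := by
  intro L
  induction L with
  | nil => intro p h; simp [maxL] at h
  | cons a L ih =>
    intro p h
    rcases hm : maxL L with _ | q <;> rw [maxL, hm] at h <;>
      simp only [Option.elim, Option.some.injEq] at h
    · simp [← h]
    · rcases sL_mem a q with h2 | h2 <;> rw [h2] at h
      · simp [← h]
      · exact List.mem_cons_of_mem _ (h ▸ ih hm)

lemma minU_mem : ∀ {L : List Bnd} {p : Bnd}, minU L = some p → p ∈ L := by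
  intro L
  induction L with
  | nil => intro p h; simp [minU] at h
  | cons a L ih =>
    intro p h
    rcases hm : minU L with _ | q <;> rw [minU, hm] at h <;>
      simp only [Option.elim, Option.some.injEq] at h
    · simp [← h]
    · rcases sU_mem a q with h2 | h2 <;> rw [h2] at h
      · simp [← h]
      · exact List.mem_cons_of_mem _ (h ▸ ih hm)

lemma maxL_sat {d : ℝ} : ∀ {L : List Bnd} {p : Bnd}, maxL L = some p → lbSat d p →
    ∀ q ∈ L, lbSat d q := by
  intro L
  induction L with
  | nil => simp
  | cons a L ih =>
    intro p h hs q hq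
    rcases hm : maxL L with _ | r <;> rw [maxL, hm] at h <;>
      simp only [Option.elim, Option.some.injEq] at h
    · have : L = [] := maxL_none hm
      subst this; simp at hq; subst hq; exact h ▸ hs
    · subst h
      have h2 := lbSat_sL hs
      rcases List.mem_cons.mp hq with rfl | hq
      · exact h2.1
      · exact ih hm h2.2 q hq

lemma minU_sat {d : ℝ} : ∀ {L : List Bnd} {p : Bnd}, minU L = some p → ubSat d p →
    ∀ q ∈ L, ubSat d q := by
  intro L
  induction L with
  | nil => simp
  | cons a L ih =>
    intro p h hs q hq
    rcases hm : minU L with _ | r <;> rw [minU, hm] at h <;>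
      simp only [Option.elim, Option.some.injEq] at h
    · have : L = [] := minU_none hm
      subst this; simp at hq; subst hq; exact h ▸ hs
    · subst h
      have h2 := ubSat_sU hs
      rcases List.mem_cons.mp hq with rfl | hq
      · exact h2.1
      · exact ih hm h2.2 q hq

/-- Fourier–Motzkin elimination in one variable. -/
lemma fm (L U : List Bnd) :
    (∃ d : ℝ, (∀ p ∈ L, lbSat d p) ∧ (∀ q ∈ U, ubSat d q)) ↔
    (∀ p ∈ L, ∀ q ∈ U, pOK p q) := by
  constructor
  · rintro ⟨d, hL, hU⟩ p hp q hq
    have h1 := hL p hp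
    have h2 := hU q hq
    simp only [lbSat] at h1
    simp only [ubSat] at h2
    unfold pOK
    split_ifs at h1 h2 ⊢ <;> simp_all <;> linarith
  · intro h
    rcases hL : maxL L with _ | p
    · have : L = [] := maxL_none hL
      subst this
      rcases hU : minU U with _ | q
      · have : U = [] := minU_none hU
        subst this; exact ⟨0, by simp, by simp⟩
      · refine ⟨q.1 - 1, by simp, minU_sat hU ?_⟩
        unfold ubSat; split_ifs <;> linarith
    · rcases hU : minU U with _ | q
      · have : U = [] := minU_none hU
        subst this
        refine ⟨p.1 + 1, maxL_sat hL ?_, by simp⟩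
        unfold lbSat; split_ifs <;> linarith
      · have hpq := h p (maxL_mem hL) q (minU_mem hU)
        set d : ℝ := if p.1 < q.1 then (p.1 + q.1) / 2 else p.1 with hd
        refine ⟨d, maxL_sat hL ?_, minU_sat hU ?_⟩
        · unfold lbSat; unfold pOK at hpq
          rw [hd]; split_ifs at hpq ⊢ <;> simp_all <;> linarith
        · unfold ubSat; unfold pOK at hpq
          rw [hd]; split_ifs at hpq ⊢ <;> simp_all <;> linarith

lemma pOK_of {d : ℝ} {p q : Bnd} (h1 : lbSat d p) (h2 : ubSat d q) : pOK p q := by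
  simp only [lbSat] at h1
  simp only [ubSat] at h2
  unfold pOK
  split_ifs at h1 h2 ⊢ <;> simp_all <;> linarith

def atomLs {X : Type} : ZoneAtom X → List (X × ℤ × Bool)
  | .single x .lt c => [(x, c, true)]
  | .single x .le c => [(x, c, false)]
  | .single x .eq c => [(x, c, false)]
  | _ => []

def atomUs {X : Type} : ZoneAtom X → List (X × ℤ × Bool)
  | .single x .eq c => [(x, c, false)]
  | .single x .ge c => [(x, c, false)]
  | .single x .gt c => [(x, c, true)]
  | _ => []

def atomDs {X : Type} : ZoneAtom X → List (ZoneAtom X)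
  | .diff x y r c => [.diff x y r c]
  | _ => []

def ev {X : Type} (w : Val X) (p : X × ℤ × Bool) : Bnd := ((w p.1 : ℝ) - p.2.1, p.2.2)

lemma atom_char {X : Type} (v w : Val X) (d : ℝ) (h : ∀ x, (w x : ℝ) = (v x : ℝ) + d)
    (a : ZoneAtom X) :
    a.sat v ↔ ((∀ b ∈ atomDs a, b.sat w) ∧ (∀ p ∈ atomLs a, lbSat d (ev w p)) ∧
      (∀ q ∈ atomUs a, ubSat d (ev w q))) := by
  cases a with
  | single x r c =>
    have hx := h x
    cases r
    · simp [ZoneAtom.sat, CmpOp.holds, atomDs, atomLs, atomUs, lbSat, ubSat, ev]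
      constructor <;> intro <;> linarith
    · simp [ZoneAtom.sat, CmpOp.holds, atomDs, atomLs, atomUs, lbSat, ubSat, ev]
      constructor <;> intro <;> linarith
    · simp [ZoneAtom.sat, CmpOp.holds, atomDs, atomLs, atomUs, lbSat, ubSat, ev]
      constructor
      · intro h1; exact ⟨by linarith, by linarith⟩
      · rintro ⟨h1, h2⟩; linarith
    · simp [ZoneAtom.sat, CmpOp.holds, atomDs, atomLs, atomUs, lbSat, ubSat, ev]
      constructor <;> intro <;> linarith
    · simp [ZoneAtom.sat, CmpOp.holds, atomDs, atomLs, atomUs, lbSat, ubSat, ev]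
      constructor <;> intro <;> linarith
  | diff x y r c =>
    have hx := h x; have hy := h y
    cases r <;> simp [ZoneAtom.sat, CmpOp.holds, atomDs, atomLs, atomUs] <;>
      constructor <;> intro <;> linarith

def pAtomLU {X : Type} (l u : X × ℤ × Bool) : ZoneAtom X :=
  .diff l.1 u.1 (if l.2.2 || u.2.2 then .lt else .le) (l.2.1 - u.2.1)

def pAtomLC {X : Type} (l : X × ℤ × Bool) (y : X) : ZoneAtom X :=
  .diff l.1 y (if l.2.2 then .lt else .le) l.2.1

def pAtom0U {X : Type} (u : X × ℤ × Bool) : ZoneAtom X :=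
  .single u.1 (if u.2.2 then .gt else .ge) u.2.1

lemma pAtomLU_sat {X : Type} (w : Val X) (l u : X × ℤ × Bool) :
    (pAtomLU l u).sat w ↔ pOK (ev w l) (ev w u) := by
  obtain ⟨x, c1, s1⟩ := l; obtain ⟨y, c2, s2⟩ := u
  cases s1 <;> cases s2 <;>
    simp only [pAtomLU, pOK, ev, ZoneAtom.sat, CmpOp.holds, Bool.or_self, Bool.or_true,
      Bool.true_or, Bool.false_or, if_true, if_false, Bool.false_eq_true, ite_true, ite_false] <;>
    push_cast <;> constructor <;> intro <;> linarith

lemma pAtomLC_sat {X : Type} (w : Val X) (l : X × ℤ × Bool) (y : X) :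
    (pAtomLC l y).sat w ↔ pOK (ev w l) ((w y : ℝ), false) := by
  obtain ⟨x, c, s⟩ := l
  cases s <;>
    simp only [pAtomLC, pOK, ev, ZoneAtom.sat, CmpOp.holds, Bool.or_self, Bool.true_or,
      Bool.false_or, Bool.false_eq_true, ite_true, ite_false] <;>
    constructor <;> intro <;> linarith

lemma pAtom0U_sat {X : Type} (w : Val X) (u : X × ℤ × Bool) :
    (pAtom0U u).sat w ↔ pOK ((0 : ℝ), false) (ev w u) := by
  obtain ⟨x, c, s⟩ := u
  cases s <;>
    simp only [pAtom0U, pOK, ev, ZoneAtom.sat, CmpOp.holds, Bool.or_self, Bool.or_true,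
      Bool.false_or, Bool.false_eq_true, ite_true, ite_false] <;>
    constructor <;> intro <;> linarith

lemma pOK_zero {X : Type} (w : Val X) (y : X) : pOK ((0 : ℝ), false) ((w y : ℝ), false) := by
  simp [pOK]

noncomputable def elapseAtoms {X : Type} [Fintype X] (φ : List (ZoneAtom X)) : List (ZoneAtom X) :=
  φ.flatMap atomDs ++ (φ.flatMap atomUs).map pAtom0U ++
  (φ.flatMap atomLs).flatMap (fun l => (φ.flatMap atomUs).map (pAtomLU l)) ++
  (φ.flatMap atomLs).flatMap (fun l => (Finset.univ.toList).map (pAtomLC l))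

section Mem
variable {X : Type} [Fintype X] {φ : List (ZoneAtom X)}

lemma memE_D {a b : ZoneAtom X} (ha : a ∈ φ) (hb : b ∈ atomDs a) : b ∈ elapseAtoms φ :=
  List.mem_append_left _ (List.mem_append_left _ (List.mem_append_left _
    (List.mem_flatMap.mpr ⟨a, ha, hb⟩)))

lemma memE_0U {u : X × ℤ × Bool} (hu : u ∈ φ.flatMap atomUs) : pAtom0U u ∈ elapseAtoms φ :=
  List.mem_append_left _ (List.mem_append_left _ (List.mem_append_right _
    (List.mem_map_of_mem hu)))

lemma memE_LU {l u : X × ℤ × Bool} (hl : l ∈ φ.flatMap atomLs) (hu : u ∈ φ.flatMap atomUs) :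
    pAtomLU l u ∈ elapseAtoms φ :=
  List.mem_append_left _ (List.mem_append_right _
    (List.mem_flatMap.mpr ⟨l, hl, List.mem_map_of_mem hu⟩))

lemma memE_LC {l : X × ℤ × Bool} (hl : l ∈ φ.flatMap atomLs) (y : X) :
    pAtomLC l y ∈ elapseAtoms φ :=
  List.mem_append_right _
    (List.mem_flatMap.mpr ⟨l, hl, List.mem_map_of_mem
      (Finset.mem_toList.mpr (Finset.mem_univ y))⟩)

end Mem

end TE

open TE in
/-- the time-elapse set of a zone is a zone. -/
theorem isZone_timeElapse {X : Type} [Fintype X] (Z : Set (Val X))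
    (hZ : IsZone Z) :
    IsZone { w : Val X | ∃ v ∈ Z, ∃ δ : NNReal, w = fun x => v x + δ } := by
  obtain ⟨φ, rfl⟩ := hZ
  refine ⟨elapseAtoms φ, ?_⟩
  ext w
  simp only [Set.mem_setOf_eq]
  constructor
  · rintro ⟨v, hv, δ, rfl⟩
    set w : Val X := fun x => v x + δ with hwdef
    have hw : ∀ x, (w x : ℝ) = (v x : ℝ) + (δ : ℝ) := by
      intro x; simp [hwdef]
    have hcomp := fun a (ha : a ∈ φ) => (atom_char v w (δ : ℝ) hw a).mp (hv a ha)
    have hLb : ∀ p, (∃ a ∈ φ, p ∈ atomLs a) → lbSat (δ : ℝ) (ev w p) := by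
      rintro p ⟨a, ha, hp⟩
      exact (hcomp a ha).2.1 p hp
    have hUb : ∀ q, (∃ a ∈ φ, q ∈ atomUs a) → ubSat (δ : ℝ) (ev w q) := by
      rintro q ⟨a, ha, hq⟩
      exact (hcomp a ha).2.2 q hq
    have h0 : lbSat (δ : ℝ) ((0 : ℝ), false) := by simp [lbSat]
    have hC : ∀ y : X, ubSat (δ : ℝ) ((w y : ℝ), false) := by
      intro y; simp [ubSat, hw y]
    intro b hb
    simp only [elapseAtoms, List.mem_append, List.mem_flatMap, List.mem_map] at hb
    rcases hb with ((⟨a, ha, hb⟩ | ⟨u, hu, rfl⟩) | ⟨l, hl, u, hu, rfl⟩) | ⟨l, hl, y, -, rfl⟩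
    · exact (hcomp a ha).1 b hb
    · exact (pAtom0U_sat w u).mpr (pOK_of h0 (hUb u hu))
    · exact (pAtomLU_sat w l u).mpr (pOK_of (hLb l hl) (hUb u hu))
    · exact (pAtomLC_sat w l y).mpr (pOK_of (hLb l hl) (hC y))
  · intro hs
    set Lb : List Bnd := ((0 : ℝ), false) :: (φ.flatMap atomLs).map (ev w) with hLbdef
    set Ub : List Bnd := (Finset.univ.toList.map fun y : X => ((w y : ℝ), false)) ++
      (φ.flatMap atomUs).map (ev w) with hUbdef
    have hmemE : ∀ b ∈ elapseAtoms φ, b.sat w := hs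
    have hpairs : ∀ p ∈ Lb, ∀ q ∈ Ub, pOK p q := by
      intro p hp q hq
      rw [hLbdef, List.mem_cons, List.mem_map] at hp
      rw [hUbdef, List.mem_append, List.mem_map] at hq
      rcases hq with hq | hq
      · obtain ⟨y, _, rfl⟩ := hq
        rcases hp with rfl | ⟨l, hl, rfl⟩
        · exact pOK_zero w y
        · exact (pAtomLC_sat w l y).mp (hmemE _ (memE_LC hl y))
      · rw [List.mem_map] at hq
        obtain ⟨u, hu, rfl⟩ := hq
        rcases hp with rfl | ⟨l, hl, rfl⟩
        · exact (pAtom0U_sat w u).mp (hmemE _ (memE_0U hu))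
        · exact (pAtomLU_sat w l u).mp (hmemE _ (memE_LU hl hu))
    obtain ⟨d, hdL, hdU⟩ := (fm Lb Ub).mpr hpairs
    have hd0 : 0 ≤ d := by
      have := hdL _ (by rw [hLbdef]; exact List.mem_cons_self)
      simpa [lbSat] using this
    have hdw : ∀ x : X, d ≤ (w x : ℝ) := by
      intro x
      have := hdU ((w x : ℝ), false) (by
        rw [hUbdef, List.mem_append, List.mem_map]
        exact Or.inl ⟨x, Finset.mem_toList.mpr (Finset.mem_univ x), rfl⟩)
      simpa [ubSat] using this
    refine ⟨fun x => ⟨(w x : ℝ) - d, by linarith [hdw x]⟩, ?_, ⟨d, hd0⟩, ?_⟩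
    · intro a ha
      refine (atom_char _ w d (fun x => by exact (sub_add_cancel _ d).symm) a).mpr ?_
      refine ⟨?_, ?_, ?_⟩
      · intro b hb
        exact hmemE b (memE_D ha hb)
      · intro p hp
        refine hdL (ev w p) ?_
        rw [hLbdef, List.mem_cons, List.mem_map]
        exact Or.inr ⟨p, List.mem_flatMap.mpr ⟨a, ha, hp⟩, rfl⟩
      · intro q hq
        refine hdU (ev w q) ?_
        rw [hUbdef, List.mem_append, List.mem_map]
        refine Or.inr (List.mem_map.mpr ⟨q, List.mem_flatMap.mpr ⟨a, ha, hq⟩, rfl⟩)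
    · funext x
      exact NNReal.eq (by exact (sub_add_cancel _ d).symm)
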